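/- Let G be a stopping rotor graph, let (ρ,σ) be a rotor-particle configuration, and let (ρ_1,σ_1) ∈ routing^∞(ρ,σ). Then a rotor-particle configuration (ρ_2,σ_2) belongs to routing^∞(ρ,σ) if and only if ρ_1 ∼ ρ_2 and σ_1 = σ_2. -/

import Mathlib

/-- A (stopping) rotor graph: a finite directed multigraph together with a
rotor order `rotor : A → A` acting on each out-arc fiber `A⁺(u)` as a single
cycle, such that from every vertex there is a directed path to a sink. -/
structure RotorGraph where
  V : Type
  A : Type
  [instFintypeV : Fintype V]
  [instFintypeA : Fintype A]
  [instDecEqV : DecidableEq V]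
  [instDecEqA : DecidableEq A]
  head : A → V
  tail : A → V
  rotor : A → A
  rotor_tail : ∀ a, tail (rotor a) = tail a
  rotor_cycle : ∀ a b : A, tail a = tail b → ∃ k : ℕ, rotor^[k] a = b
  stopping : ∀ v : V, ∃ (m : ℕ) (p : ℕ → V), p 0 = v ∧ (¬∃ a, tail a = p m) ∧
    ∀ i < m, ∃ a, tail a = p i ∧ head a = p (i + 1)

attribute [instance] RotorGraph.instFintypeV RotorGraph.instFintypeA
  RotorGraph.instDecEqV RotorGraph.instDecEqA

namespace RotorGraph

variable (G : RotorGraph)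

/-- The set `V₀` of non-sink vertices (positive outdegree). -/
def V0 : Set G.V := {v | ∃ a, G.tail a = v}

/-- A rotor configuration: a choice `ρ(u) ∈ A⁺(u)` for every `u ∈ V₀`. -/
def RotorConfig := {ρ : ↥G.V0 → G.A // ∀ v : ↥G.V0, G.tail (ρ v) = v.val}

/-- The routing step `routing⁺_u`: move a particle from `u` along `ρ(u)` and
turn the rotor at `u`. -/
def RoutingStep (p q : G.RotorConfig × (G.V → ℤ)) : Prop :=
  ∃ u : ↥G.V0,
    (∀ w : ↥G.V0, q.1.val w = if w = u then G.rotor (p.1.val u) else p.1.val w) ∧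
    (∀ v : G.V, q.2 v =
      p.2 v - (if v = u.val then 1 else 0) + (if v = G.head (p.1.val u) then 1 else 0))

/-- Equivalence of rotor-particle configurations: a finite sequence of
operators `routing⁺_u` and `routing⁻_u`. -/
def RPEquiv : (G.RotorConfig × (G.V → ℤ)) → (G.RotorConfig × (G.V → ℤ)) → Prop :=
  Relation.ReflTransGen (fun p q => G.RoutingStep p q ∨ G.RoutingStep q p)

/-- Equivalence of rotor configurations: `ρ ∼ ρ'` iff `(ρ,σ) ∼ (ρ',σ)` for some
(equivalently, every) particle configuration `σ`. -/
def RotorEquiv (ρ ρ' : G.RotorConfig) : Prop :=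
  ∃ σ : G.V → ℤ, G.RPEquiv (ρ, σ) (ρ', σ)

/-- `C` is (the vertex set of) a directed circuit of the functional graph
`G(ρ)`. -/
def IsCircuit (ρ : G.RotorConfig) (C : Set ↥G.V0) : Prop :=
  ∃ m : ℕ, 0 < m ∧ ∃ f : ZMod m → ↥G.V0, Function.Injective f ∧ Set.range f = C ∧
    ∀ i : ZMod m, G.head (ρ.val (f i)) = (f (i + 1)).val

/-- Positive cycle push: turn the rotor at every vertex of a directed circuit
of `G(ρ)`.  (A negative cycle push from `ρ` to `ρ'` is exactly a positive cycle
push from `ρ'` to `ρ`.) -/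
def PosCyclePush (ρ ρ' : G.RotorConfig) : Prop :=
  ∃ C : Set ↥G.V0, G.IsCircuit ρ C ∧
    (∀ u ∈ C, ρ'.val u = G.rotor (ρ.val u)) ∧ (∀ u ∉ C, ρ'.val u = ρ.val u)

/-- A finite sequence of positive and negative cycle pushes. -/
def CyclePushSeq : G.RotorConfig → G.RotorConfig → Prop :=
  Relation.ReflTransGen (fun a b => G.PosCyclePush a b ∨ G.PosCyclePush b a)

/-- `routing^∞(ρ,σ)`: all rotor-particle configurations equivalent to `(ρ,σ)`
with no particles left on `V₀`. -/
def RoutingInfty (p : G.RotorConfig × (G.V → ℤ)) : Set (G.RotorConfig × (G.V → ℤ)) :=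
  {q | G.RPEquiv p q ∧ ∀ u : ↥G.V0, q.2 u.val = 0}

end RotorGraph

namespace RotorGraph

variable (G : RotorGraph)

noncomputable instance instFintypeV0 : Fintype ↥G.V0 := Fintype.ofFinite _

lemma rotor_surjective : Function.Surjective G.rotor := by
  intro a
  obtain ⟨k, hk⟩ := G.rotor_cycle (G.rotor a) a (G.rotor_tail a)
  refine ⟨G.rotor^[k] a, ?_⟩
  calc G.rotor (G.rotor^[k] a) = G.rotor^[k+1] a := (Function.iterate_succ_apply' _ _ _).symm
    _ = G.rotor^[k] (G.rotor a) := Function.iterate_succ_apply _ _ _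
    _ = a := hk

noncomputable def rotorPerm : Equiv.Perm G.A :=
  Equiv.ofBijective G.rotor
    ⟨Finite.injective_iff_surjective.mpr G.rotor_surjective, G.rotor_surjective⟩

lemma rotorPerm_apply (a : G.A) : G.rotorPerm a = G.rotor a := rfl

noncomputable def itZ (m : ℤ) (a : G.A) : G.A := (G.rotorPerm ^ m) a

lemma itZ_zero (a : G.A) : G.itZ 0 a = a := rfl

lemma itZ_succ (m : ℤ) (a : G.A) : G.itZ (m + 1) a = G.rotor (G.itZ m a) := by
  have h : (m + 1 : ℤ) = 1 + m := by ring
  rw [itZ, h, zpow_add, zpow_one]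
  rfl

lemma itZ_pred (m : ℤ) (a : G.A) : G.itZ (m - 1) a = G.rotorPerm⁻¹ (G.itZ m a) := by
  have h : (m - 1 : ℤ) = -1 + m := by ring
  rw [itZ, h, zpow_add, zpow_neg_one]
  rfl

lemma rotorPerm_inv_rotor (a : G.A) : G.rotorPerm⁻¹ (G.rotor a) = a := by
  rw [← rotorPerm_apply]
  exact Equiv.symm_apply_apply _ _

/-- Net number of particles sent to `v` by `m` net firings of the rotor
starting in position `a`. -/
noncomputable def gfun (a : G.A) (m : ℤ) (v : G.V) : ℤ :=
  (∑ i ∈ Finset.Ico (0:ℤ) m, if G.head (G.itZ i a) = v then 1 else 0)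
  - (∑ i ∈ Finset.Ico m (0:ℤ), if G.head (G.itZ i a) = v then 1 else 0)

lemma gfun_zero (a : G.A) (v : G.V) : G.gfun a 0 v = 0 := by simp [gfun]

lemma gfun_succ (a : G.A) (m : ℤ) (v : G.V) :
    G.gfun a (m + 1) v = G.gfun a m v + (if G.head (G.itZ m a) = v then 1 else 0) := by
  rcases le_or_gt 0 m with h | h
  · have h2 : Finset.Ico (m+1) (0:ℤ) = ∅ := Finset.Ico_eq_empty (by omega)
    have h3 : Finset.Ico m (0:ℤ) = ∅ := Finset.Ico_eq_empty (by omega)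
    have h4 : Finset.Ico (0:ℤ) (m+1) = insert m (Finset.Ico 0 m) := by
      ext x; simp [Finset.mem_Ico]; omega
    rw [gfun, gfun, h2, h3, h4, Finset.sum_insert (by simp)]
    simp only [Finset.sum_empty, sub_zero]
    ring
  · have h2 : Finset.Ico (0:ℤ) (m+1) = ∅ := Finset.Ico_eq_empty (by omega)
    have h3 : Finset.Ico (0:ℤ) m = ∅ := Finset.Ico_eq_empty (by omega)
    have h4 : Finset.Ico m (0:ℤ) = insert m (Finset.Ico (m+1) 0) := by
      ext x; simp [Finset.mem_Ico]; omega
    rw [gfun, gfun, h2, h3, h4, Finset.sum_insert (by simp)]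
    simp only [Finset.sum_empty, zero_sub]
    ring

lemma gfun_pred (a : G.A) (m : ℤ) (v : G.V) :
    G.gfun a (m - 1) v = G.gfun a m v - (if G.head (G.itZ (m-1) a) = v then 1 else 0) := by
  have h := G.gfun_succ a (m - 1) v
  have h2 : m - 1 + 1 = m := by ring
  rw [h2] at h
  linarith

lemma head_indicator_sum (a : G.A) (i : ℤ) :
    ∑ v : G.V, (if G.head (G.itZ i a) = v then (1:ℤ) else 0) = 1 := by
  rw [Finset.sum_ite_eq]
  simp

lemma gfun_sum (a : G.A) (m : ℤ) : ∑ v : G.V, G.gfun a m v = m := by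
  have h1 : ∀ (s : Finset ℤ),
      ∑ v : G.V, ∑ i ∈ s, (if G.head (G.itZ i a) = v then (1:ℤ) else 0) = s.card := by
    intro s
    rw [Finset.sum_comm, Finset.sum_congr rfl (fun i _ => G.head_indicator_sum a i)]
    simp
  simp only [gfun]
  rw [Finset.sum_sub_distrib, h1, h1, Int.card_Ico, Int.card_Ico]
  omega

lemma gfun_nonneg (a : G.A) {m : ℤ} (h : 0 ≤ m) (v : G.V) : 0 ≤ G.gfun a m v := by
  have h2 : Finset.Ico m (0:ℤ) = ∅ := Finset.Ico_eq_empty (by omega)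
  rw [gfun, h2]
  simp only [Finset.sum_empty, sub_zero]
  exact Finset.sum_nonneg (fun i _ => by split <;> norm_num)

lemma gfun_nonpos (a : G.A) {m : ℤ} (h : m ≤ 0) (v : G.V) : G.gfun a m v ≤ 0 := by
  have h2 : Finset.Ico (0:ℤ) m = ∅ := Finset.Ico_eq_empty (by omega)
  rw [gfun, h2]
  simp only [Finset.sum_empty, zero_sub, neg_nonpos]
  exact Finset.sum_nonneg (fun i _ => by split <;> norm_num)

/-- The master invariant along a routing chain: there is a net firing vector
`n` that determines the new rotor configuration and the new particle
configuration. -/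
lemma rpEquiv_invariant {p q : G.RotorConfig × (G.V → ℤ)} (h : G.RPEquiv p q) :
    ∃ n : ↥G.V0 → ℤ,
      (∀ u : ↥G.V0, q.1.val u = G.itZ (n u) (p.1.val u)) ∧
      (∀ v : G.V, q.2 v = p.2 v +
        ∑ u : ↥G.V0, (G.gfun (p.1.val u) (n u) v - if (u : G.V) = v then n u else 0)) := by
  induction h with
  | refl =>
      exact ⟨0, fun u => (G.itZ_zero _).symm, fun v => by simp [gfun_zero]⟩
  | @tail b c hab hbc ih =>
      obtain ⟨n, hn1, hn2⟩ := ih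
      rcases hbc with ⟨u₀, hρ, hσ⟩ | ⟨u₀, hρ, hσ⟩
      · -- forward step b → c at u₀
        set n' : ↥G.V0 → ℤ := fun u => if u = u₀ then n u + 1 else n u with hn'def
        have hn' : ∀ u, n' u = if u = u₀ then n u + 1 else n u := fun _ => rfl
        refine ⟨n', ?_, ?_⟩
        · intro u
          by_cases hu : u = u₀
          · subst hu
            rw [hn' u, if_pos rfl, hρ u, if_pos rfl, hn1 u, G.itZ_succ]
          · rw [hn' u, if_neg hu, hρ u, if_neg hu]
            exact hn1 u
        · intro v
          have hterm : ∀ u : ↥G.V0, u ≠ u₀ →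
              (G.gfun (p.1.val u) (n' u) v - if (u : G.V) = v then n' u else 0)
              - (G.gfun (p.1.val u) (n u) v - if (u : G.V) = v then n u else 0) = 0 := by
            intro u hu
            rw [hn' u, if_neg hu]
            ring
          have hdiff : (∑ u : ↥G.V0,
                (G.gfun (p.1.val u) (n' u) v - if (u : G.V) = v then n' u else 0))
              - (∑ u : ↥G.V0,
                (G.gfun (p.1.val u) (n u) v - if (u : G.V) = v then n u else 0))
              = (G.gfun (p.1.val u₀) (n' u₀) v - if (u₀ : G.V) = v then n' u₀ else 0)
                - (G.gfun (p.1.val u₀) (n u₀) v - if (u₀ : G.V) = v then n u₀ else 0) := by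
            rw [← Finset.sum_sub_distrib]
            exact Finset.sum_eq_single_of_mem u₀ (Finset.mem_univ _)
              (fun u _ hu => hterm u hu)
          rw [hn' u₀, if_pos rfl, G.gfun_succ] at hdiff
          have hb := hn2 v
          have hc := hσ v
          rw [hn1 u₀] at hc
          have e1 : (if v = (u₀ : G.V) then (1:ℤ) else 0)
              = (if (u₀ : G.V) = v then 1 else 0) := if_congr eq_comm rfl rfl
          have e2 : (if v = G.head (G.itZ (n u₀) (p.1.val u₀)) then (1:ℤ) else 0)
              = (if G.head (G.itZ (n u₀) (p.1.val u₀)) = v then 1 else 0) :=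
            if_congr eq_comm rfl rfl
          rw [e1, e2] at hc
          have e4 : (if (u₀ : G.V) = v then n u₀ + 1 else 0)
              - (if (u₀ : G.V) = v then n u₀ else 0)
              = (if (u₀ : G.V) = v then (1:ℤ) else 0) := by
            split <;> ring
          linarith [hb, hc, hdiff, e4]
      · -- backward step: RoutingStep c b at u₀
        have hc0 : c.1.val u₀ = G.itZ (n u₀ - 1) (p.1.val u₀) := by
          have h0 := hρ u₀
          rw [if_pos rfl] at h0
          have hinv : G.rotorPerm⁻¹ (b.1.val u₀) = c.1.val u₀ := by
            rw [h0, G.rotorPerm_inv_rotor]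
          rw [← hinv, hn1 u₀, G.itZ_pred]
        set n' : ↥G.V0 → ℤ := fun u => if u = u₀ then n u - 1 else n u with hn'def
        have hn' : ∀ u, n' u = if u = u₀ then n u - 1 else n u := fun _ => rfl
        refine ⟨n', ?_, ?_⟩
        · intro u
          by_cases hu : u = u₀
          · subst hu
            rw [hn' u, if_pos rfl]
            exact hc0
          · rw [hn' u, if_neg hu]
            have hh := hρ u
            rw [if_neg hu] at hh
            rw [← hh]
            exact hn1 u
        · intro v
          have hterm : ∀ u : ↥G.V0, u ≠ u₀ →
              (G.gfun (p.1.val u) (n' u) v - if (u : G.V) = v then n' u else 0)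
              - (G.gfun (p.1.val u) (n u) v - if (u : G.V) = v then n u else 0) = 0 := by
            intro u hu
            rw [hn' u, if_neg hu]
            ring
          have hdiff : (∑ u : ↥G.V0,
                (G.gfun (p.1.val u) (n' u) v - if (u : G.V) = v then n' u else 0))
              - (∑ u : ↥G.V0,
                (G.gfun (p.1.val u) (n u) v - if (u : G.V) = v then n u else 0))
              = (G.gfun (p.1.val u₀) (n' u₀) v - if (u₀ : G.V) = v then n' u₀ else 0)
                - (G.gfun (p.1.val u₀) (n u₀) v - if (u₀ : G.V) = v then n u₀ else 0) := by
            rw [← Finset.sum_sub_distrib]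
            exact Finset.sum_eq_single_of_mem u₀ (Finset.mem_univ _)
              (fun u _ hu => hterm u hu)
          rw [hn' u₀, if_pos rfl, G.gfun_pred] at hdiff
          have hb := hn2 v
          have hc := hσ v
          rw [hc0] at hc
          have e1 : (if v = (u₀ : G.V) then (1:ℤ) else 0)
              = (if (u₀ : G.V) = v then 1 else 0) := if_congr eq_comm rfl rfl
          have e2 : (if v = G.head (G.itZ (n u₀ - 1) (p.1.val u₀)) then (1:ℤ) else 0)
              = (if G.head (G.itZ (n u₀ - 1) (p.1.val u₀)) = v then 1 else 0) :=
            if_congr eq_comm rfl rfl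
          rw [e1, e2] at hc
          have e4 : (if (u₀ : G.V) = v then n u₀ - 1 else 0)
              - (if (u₀ : G.V) = v then n u₀ else 0)
              = -(if (u₀ : G.V) = v then (1:ℤ) else 0) := by
            split <;> ring
          linarith [hb, hc, hdiff, e4]

/-- Double-counting lemma: if the net flow is conserved at every non-sink
vertex, then no vertex with positive net firing sends anything outside `V₀`. -/
lemma aux_zero (row : ↥G.V0 → G.V → ℤ) (n : ↥G.V0 → ℤ)
    (hsum : ∀ u, ∑ v : G.V, row u v = n u)
    (hpos : ∀ u, 0 ≤ n u → ∀ v, 0 ≤ row u v)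
    (hneg : ∀ u, n u ≤ 0 → ∀ v, row u v ≤ 0)
    (H : ∀ w : ↥G.V0, ∑ u : ↥G.V0, row u w.val = n w) :
    ∀ u : ↥G.V0, 0 < n u → ∀ v : G.V, v ∉ G.V0 → row u v = 0 := by
  classical
  set P : Finset ↥G.V0 := Finset.univ.filter (fun u => 0 < n u) with hP
  set I : Finset G.V := P.image Subtype.val with hI
  have himage : ∀ u, ∑ w ∈ P, row u w.val = ∑ v ∈ I, row u v := fun u =>
    (Finset.sum_image (fun a _ b _ h => Subtype.ext h)).symm
  have hPmem : ∀ u, u ∈ P ↔ 0 < n u := by intro u; simp [hP]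
  have step1 : ∀ u ∈ P, ∑ w ∈ P, row u w.val ≤ n u := by
    intro u hu
    rw [himage, ← hsum u]
    exact Finset.sum_le_sum_of_subset_of_nonneg (Finset.subset_univ I)
      (fun v _ _ => hpos u (le_of_lt ((hPmem u).mp hu)) v)
  have step2 : ∀ w ∈ P, n w ≤ ∑ u ∈ P, row u w.val := by
    intro w hw
    have h0 := H w
    have hsplit := Finset.sum_filter_add_sum_filter_not Finset.univ
      (fun u => 0 < n u) (fun u => row u w.val)
    have hle : ∑ u ∈ Finset.univ.filter (fun u => ¬ 0 < n u), row u w.val ≤ 0 :=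
      Finset.sum_nonpos (fun u hu => by
        have := (Finset.mem_filter.mp hu).2
        exact hneg u (by omega) w.val)
    have : ∑ u ∈ P, row u w.val + ∑ u ∈ Finset.univ.filter (fun u => ¬ 0 < n u), row u w.val
        = n w := by rw [hsplit, h0]
    linarith
  have key : ∀ u ∈ P, ∑ w ∈ P, row u w.val = n u := by
    have h1 : ∑ u ∈ P, (n u - ∑ w ∈ P, row u w.val) ≤ 0 := by
      calc ∑ u ∈ P, (n u - ∑ w ∈ P, row u w.val)
          = ∑ u ∈ P, n u - ∑ u ∈ P, ∑ w ∈ P, row u w.val := Finset.sum_sub_distrib _ _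
        _ = ∑ w ∈ P, n w - ∑ w ∈ P, ∑ u ∈ P, row u w.val := by rw [Finset.sum_comm]
        _ = ∑ w ∈ P, (n w - ∑ u ∈ P, row u w.val) := (Finset.sum_sub_distrib _ _).symm
        _ ≤ 0 := Finset.sum_nonpos (fun w hw => sub_nonpos.mpr (step2 w hw))
    have h2 : ∀ u ∈ P, 0 ≤ n u - ∑ w ∈ P, row u w.val :=
      fun u hu => sub_nonneg.mpr (step1 u hu)
    have h3 : ∑ u ∈ P, (n u - ∑ w ∈ P, row u w.val) = 0 :=
      le_antisymm h1 (Finset.sum_nonneg h2)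
    intro u hu
    have := (Finset.sum_eq_zero_iff_of_nonneg h2).mp h3 u hu
    omega
  intro u hu v hv
  have huP : u ∈ P := (hPmem u).mpr hu
  have hIu : ∑ v' ∈ I, row u v' = n u := by rw [← himage]; exact key u huP
  have h4 : ∑ v' ∈ Finset.univ \ I, row u v' = 0 := by
    have h5 := Finset.sum_sdiff (f := fun v' => row u v') (Finset.subset_univ I)
    have h6 := hsum u
    rw [hIu] at h5
    linarith [h5, h6]
  have h5 : ∀ v' ∈ Finset.univ \ I, 0 ≤ row u v' := fun v' _ => hpos u hu.le v'
  have hvmem : v ∈ Finset.univ \ I := by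
    simp only [Finset.mem_sdiff, Finset.mem_univ, true_and, hI, Finset.mem_image]
    rintro ⟨w, _, rfl⟩
    exact hv w.2
  exact (Finset.sum_eq_zero_iff_of_nonneg h5).mp h4 v hvmem

/-- Uniqueness of the fully-routed particle configuration. -/
lemma routed_eq {ρ₁ ρ₂ : G.RotorConfig} {σ₁ σ₂ : G.V → ℤ}
    (h : G.RPEquiv (ρ₁, σ₁) (ρ₂, σ₂))
    (h1 : ∀ u : ↥G.V0, σ₁ u.val = 0) (h2 : ∀ u : ↥G.V0, σ₂ u.val = 0) :
    σ₁ = σ₂ := by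
  classical
  obtain ⟨n, hn1, hn2⟩ := G.rpEquiv_invariant h
  dsimp only at hn1 hn2
  set row : ↥G.V0 → G.V → ℤ := fun u v => G.gfun (ρ₁.val u) (n u) v with hrow
  have hsum : ∀ u, ∑ v : G.V, row u v = n u := fun u => G.gfun_sum _ _
  have hpos : ∀ u, 0 ≤ n u → ∀ v, 0 ≤ row u v := fun u hu v => G.gfun_nonneg _ hu v
  have hneg : ∀ u, n u ≤ 0 → ∀ v, row u v ≤ 0 := fun u hu v => G.gfun_nonpos _ hu v
  have hIfV0 : ∀ (w : ↥G.V0),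
      ∑ u : ↥G.V0, (if (u : G.V) = w.val then n u else 0) = n w := by
    intro w
    have hcong : ∀ u : ↥G.V0, (if (u : G.V) = w.val then n u else 0)
        = (if u = w then n u else 0) := by
      intro u
      by_cases hu : u = w
      · subst hu; simp
      · rw [if_neg hu, if_neg (fun hh => hu (Subtype.ext hh))]
    rw [Finset.sum_congr rfl (fun u _ => hcong u), Finset.sum_ite_eq' Finset.univ w n]
    simp
  have H : ∀ w : ↥G.V0, ∑ u : ↥G.V0, row u w.val = n w := by
    intro w
    have hw := hn2 w.val
    rw [h1 w, h2 w, Finset.sum_sub_distrib, hIfV0 w] at hw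
    linarith
  have keypos := G.aux_zero row n hsum hpos hneg H
  have keyneg : ∀ u : ↥G.V0, n u < 0 → ∀ v : G.V, v ∉ G.V0 → row u v = 0 := by
    intro u hu v hv
    have hz := G.aux_zero (fun u v => -(row u v)) (fun u => -(n u))
      (fun u => by
        show ∑ v : G.V, -(row u v) = -(n u)
        rw [Finset.sum_neg_distrib, hsum u])
      (fun u hu v => by
        have hu' : (0:ℤ) ≤ -n u := hu
        show (0:ℤ) ≤ -(row u v)
        have := hneg u (by linarith) v
        linarith)
      (fun u hu v => by
        have hu' : -n u ≤ (0:ℤ) := hu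
        show -(row u v) ≤ (0:ℤ)
        have := hpos u (by linarith) v
        linarith)
      (fun w => by
        show ∑ u : ↥G.V0, -(row u w.val) = -(n w)
        rw [Finset.sum_neg_distrib, H w])
      u (by show (0:ℤ) < -n u; linarith) v hv
    have h' : -(row u v) = 0 := hz
    linarith
  funext v
  by_cases hv : v ∈ G.V0
  · exact (h1 ⟨v, hv⟩).trans (h2 ⟨v, hv⟩).symm
  · have hzero : ∀ u : ↥G.V0, row u v = 0 := by
      intro u
      rcases lt_trichotomy (n u) 0 with hlt | heq | hgt
      · exact keyneg u hlt v hv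
      · simp [hrow, heq, gfun_zero]
      · exact keypos u hgt v hv
    have hterm : ∀ u : ↥G.V0,
        row u v - (if (u : G.V) = v then n u else 0) = 0 := by
      intro u
      rw [hzero u, if_neg (fun hh : (u : G.V) = v => hv (hh ▸ u.2))]
      ring
    have hw := hn2 v
    rw [Finset.sum_eq_zero (fun u _ => hterm u)] at hw
    linarith

lemma RoutingStep.shift {p q : G.RotorConfig × (G.V → ℤ)} (h : G.RoutingStep p q)
    (δ : G.V → ℤ) :
    G.RoutingStep (p.1, fun v => p.2 v + δ v) (q.1, fun v => q.2 v + δ v) := by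
  obtain ⟨u, hρ, hσ⟩ := h
  refine ⟨u, hρ, fun v => ?_⟩
  show q.2 v + δ v = p.2 v + δ v - _ + _
  rw [hσ v]
  ring

lemma RPEquiv.shift {p q : G.RotorConfig × (G.V → ℤ)} (h : G.RPEquiv p q)
    (δ : G.V → ℤ) :
    G.RPEquiv (p.1, fun v => p.2 v + δ v) (q.1, fun v => q.2 v + δ v) := by
  induction h with
  | refl => exact Relation.ReflTransGen.refl
  | @tail b c hab hbc ih =>
      exact ih.tail (hbc.imp (fun hh => RoutingStep.shift G hh δ) (fun hh => RoutingStep.shift G hh δ))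

lemma RPEquiv.symm {p q : G.RotorConfig × (G.V → ℤ)} (h : G.RPEquiv p q) :
    G.RPEquiv q p :=
  (@Relation.ReflTransGen.stdSymm _ _ ⟨fun _ _ hh => hh.symm⟩).symm _ _ h

end RotorGraph

/-- Let `G` be a stopping rotor graph, `(ρ,σ)` a rotor-particle
configuration, and `(ρ₁,σ₁) ∈ routing^∞(ρ,σ)`. Then `(ρ₂,σ₂) ∈ routing^∞(ρ,σ)`
if and only if `ρ₁ ∼ ρ₂` and `σ₁ = σ₂`. -/
theorem mem_routingInfty_iff (G : RotorGraph)
    (ρ ρ₁ ρ₂ : G.RotorConfig) (σ σ₁ σ₂ : G.V → ℤ)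
    (h₁ : (ρ₁, σ₁) ∈ G.RoutingInfty (ρ, σ)) :
    (ρ₂, σ₂) ∈ G.RoutingInfty (ρ, σ) ↔ (G.RotorEquiv ρ₁ ρ₂ ∧ σ₁ = σ₂) := by
  obtain ⟨he1, hz1⟩ := h₁
  constructor
  · rintro ⟨he2, hz2⟩
    have h12 : G.RPEquiv (ρ₁, σ₁) (ρ₂, σ₂) :=
      Relation.ReflTransGen.trans (RotorGraph.RPEquiv.symm G he1) he2
    have hσ : σ₁ = σ₂ := G.routed_eq h12 hz1 hz2
    subst hσ
    exact ⟨⟨σ₁, h12⟩, rfl⟩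
  · rintro ⟨⟨τ, hτ⟩, rfl⟩
    have hshift := RotorGraph.RPEquiv.shift G hτ (fun v => σ₁ v - τ v)
    have hfun : (fun v => τ v + (σ₁ v - τ v)) = σ₁ := funext fun v => by ring
    rw [hfun] at hshift
    exact ⟨Relation.ReflTransGen.trans he1 hshift, hz1⟩
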